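/- Let 𝐂 be a full semi-AFL, G a finitely generated group, H ≤ G a subgroup of finite index, and b₁, …, bₙ a right transversal for H in G. Then, for each • ∈ {∀, ∃}: 𝐂^•(G) = { ⋃_{i=1}^n Lᵢbᵢ : Lᵢ ∈ 𝐂^•(H) for all 1 ≤ i ≤ n }. That is, the 𝐂^•-subsets of G are exactly the finite unions ⋃ᵢ Lᵢbᵢ where each Lᵢ is a 𝐂^•-subset of H. -/

import Mathlib

/-!  Common framework: classes of languages over finite alphabets, `C^∀`- and
`C^∃`-subsets of finitely generated monoids and groups, closure properties
(cone, full semi-AFL), and `C^•`-flatness.  -/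

/-- A class of languages: for each finite alphabet `Fin n`, a collection of languages over it. -/
abbrev LangClass : Type := ∀ n : ℕ, Set (Set (List (Fin n)))

/-- `π` is a surjective monoid homomorphism from the free monoid on `Fin n`
(words, under concatenation) onto `M`; i.e. it presents `M` as a monoid generated
by the finite set `Fin n`. -/
structure FreeHomOnto {n : ℕ} (M : Type) [Monoid M] (π : List (Fin n) → M) : Prop where
  map_nil : π [] = 1
  map_append : ∀ u v : List (Fin n), π (u ++ v) = π u * π v
  surjective : Function.Surjective π

/-- `X ⊆ M` is a `C^∀`-subset of `M` w.r.t. the generating map `π`: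
the full preimage `π⁻¹(X)` is a language of the class `C`. -/
def CForall (C : LangClass) {n : ℕ} {M : Type} [Monoid M]
    (π : List (Fin n) → M) (X : Set M) : Prop :=
  {w : List (Fin n) | π w ∈ X} ∈ C n

/-- `X ⊆ M` is a `C^∃`-subset of `M` w.r.t. the generating map `π`:
some language of the class `C` is mapped onto `X` by `π`. -/
def CExists (C : LangClass) {n : ℕ} {M : Type} [Monoid M]
    (π : List (Fin n) → M) (X : Set M) : Prop :=
  ∃ L ∈ C n, π '' L = X

/-- Closure under inverse images of homomorphisms of free monoids on finite alphabets.
Such a homomorphism is determined by its values `f i` on letters, sending `w` to `w.flatMap f`. -/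
def ClosedUnderInvHom (C : LangClass) : Prop :=
  ∀ (m n : ℕ) (f : Fin m → List (Fin n)), ∀ L ∈ C n,
    {w : List (Fin m) | w.flatMap f ∈ L} ∈ C m

/-- Closure under images of homomorphisms of free monoids on finite alphabets. -/
def ClosedUnderHom (C : LangClass) : Prop :=
  ∀ (m n : ℕ) (f : Fin m → List (Fin n)), ∀ L ∈ C m,
    (fun w : List (Fin m) => w.flatMap f) '' L ∈ C n

/-- A language over `Fin n` is regular if it is accepted by a DFA with finitely many states. -/
def IsRegularLang {n : ℕ} (L : Set (List (Fin n))) : Prop :=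
  ∃ (σ : Type) (_ : Fintype σ) (A : DFA (Fin n) σ), ∀ w : List (Fin n), w ∈ A.accepts ↔ w ∈ L

/-- Closure under intersection with regular languages. -/
def ClosedUnderInterReg (C : LangClass) : Prop :=
  ∀ (n : ℕ), ∀ L ∈ C n, ∀ R : Set (List (Fin n)), IsRegularLang R → L ∩ R ∈ C n

/-- Closure under (binary) union. -/
def ClosedUnderUnion (C : LangClass) : Prop :=
  ∀ (n : ℕ), ∀ L₁ ∈ C n, ∀ L₂ ∈ C n, L₁ ∪ L₂ ∈ C n

/-- A cone: a class of languages closed under homomorphisms, inverse homomorphisms,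
and intersection with regular languages. -/
def IsCone (C : LangClass) : Prop :=
  ClosedUnderHom C ∧ ClosedUnderInvHom C ∧ ClosedUnderInterReg C

/-- A full semi-AFL: a cone closed under union. -/
def IsFullSemiAFL (C : LangClass) : Prop :=
  IsCone C ∧ ClosedUnderUnion C

/-- `G` is `C^∀`-flat as a group: for every finitely generated subgroup `H ≤ G`
(presented by a finite monoid generating map `ρ`), a subset of `H` is a `C^∀`-subset
of `G` iff it is a `C^∀`-subset of `H`; i.e. `C^∀(G | H) = C^∀(H)`. -/
def GroupCForallFlat (C : LangClass) (G : Type) [Group G] : Prop :=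
  ∀ (H : Subgroup G) (n k : ℕ) (π : List (Fin n) → G) (ρ : List (Fin k) → ↥H),
    FreeHomOnto G π → FreeHomOnto (↥H) ρ →
      ∀ X : Set G, X ⊆ (H : Set G) →
        (CForall C π X ↔ CForall C ρ (Subtype.val ⁻¹' X))

/-- `G` is `C^∃`-flat as a group: for every finitely generated subgroup `H ≤ G`,
a subset of `H` is a `C^∃`-subset of `G` iff it is a `C^∃`-subset of `H`;
i.e. `C^∃(G | H) = C^∃(H)`. -/
def GroupCExistsFlat (C : LangClass) (G : Type) [Group G] : Prop :=
  ∀ (H : Subgroup G) (n k : ℕ) (π : List (Fin n) → G) (ρ : List (Fin k) → ↥H),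
    FreeHomOnto G π → FreeHomOnto (↥H) ρ →
      ∀ X : Set G, X ⊆ (H : Set G) →
        (CExists C π X ↔ CExists C ρ (Subtype.val ⁻¹' X))

/-- `M` is `C^∀`-flat as a monoid: for every finitely generated submonoid `N ≤ M`,
a subset of `N` is a `C^∀`-subset of `M` iff it is a `C^∀`-subset of `N`;
i.e. `C^∀(M | N) = C^∀(N)`. -/
def MonoidCForallFlat (C : LangClass) (M : Type) [Monoid M] : Prop :=
  ∀ (N : Submonoid M) (n k : ℕ) (π : List (Fin n) → M) (ρ : List (Fin k) → ↥N),
    FreeHomOnto M π → FreeHomOnto (↥N) ρ →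
      ∀ X : Set M, X ⊆ (N : Set M) →
        (CForall C π X ↔ CForall C ρ (Subtype.val ⁻¹' X))

/-- `M` is `C^∃`-flat as a monoid: for every finitely generated submonoid `N ≤ M`,
a subset of `N` is a `C^∃`-subset of `M` iff it is a `C^∃`-subset of `N`;
i.e. `C^∃(M | N) = C^∃(N)`. -/
def MonoidCExistsFlat (C : LangClass) (M : Type) [Monoid M] : Prop :=
  ∀ (N : Submonoid M) (n k : ℕ) (π : List (Fin n) → M) (ρ : List (Fin k) → ↥N),
    FreeHomOnto M π → FreeHomOnto (↥N) ρ →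
      ∀ X : Set M, X ⊆ (N : Set M) →
        (CExists C π X ↔ CExists C ρ (Subtype.val ⁻¹' X))

/-! ### Auxiliary machinery for `stmt8` -/

lemma isRegular_foldl {n : ℕ} {σ : Type} [Fintype σ] (step : σ → Fin n → σ) (s0 : σ)
    (F : Set σ) : IsRegularLang {w : List (Fin n) | w.foldl step s0 ∈ F} :=
  ⟨σ, inferInstance, ⟨step, s0, F⟩, fun _ => Iff.rfl⟩

lemma iUnion_mem_C (C : LangClass) (hU : ClosedUnderUnion C)
    (n : ℕ) {N : ℕ} (f : Fin (N+1) → Set (List (Fin n)))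
    (hf : ∀ i, f i ∈ C n) : (⋃ i, f i) ∈ C n := by
  induction N with
  | zero =>
    have h : (⋃ i, f i) = f 0 := by
      ext x; simp [Fin.exists_fin_one]
    rw [h]; exact hf 0
  | succ N ih =>
    have h : (⋃ i, f i) = (⋃ i : Fin (N+1), f i.castSucc) ∪ f (Fin.last _) := by
      ext x
      simp only [Set.mem_iUnion, Set.mem_union]
      constructor
      · rintro ⟨i, hi⟩
        rcases Fin.eq_castSucc_or_eq_last i with ⟨j, rfl⟩ | rfl
        · exact Or.inl ⟨j, hi⟩
        · exact Or.inr hi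
      · rintro (⟨j, hj⟩ | h)
        · exact ⟨_, hj⟩
        · exact ⟨_, h⟩
    rw [h]
    exact hU n _ (ih _ (fun i => hf i.castSucc)) _ (hf (Fin.last _))

/-- Annotate each letter of a word with the state of the automaton `δ` at the
moment the letter is read, starting from state `j`, encoding the (state, letter)
pairs via `enc`. -/
def annotate {α β γ : Type} (δ : β → α → β) (enc : β → α → γ) : β → List α → List γ
  | _, [] => []
  | j, a :: w => enc j a :: annotate δ enc (δ j a) w

lemma flatMap_annotate {α β γ : Type} (δ : β → α → β) (enc : β → α → γ) (e : γ → List α)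
    (he : ∀ j a, e (enc j a) = [a]) : ∀ j (w : List α), (annotate δ enc j w).flatMap e = w := by
  intro j w
  induction w generalizing j with
  | nil => rfl
  | cons a w ih => simp [annotate, he, ih]

/-- Let `C` be a full semi-AFL, `G` a finitely generated group,
`H ≤ G` a finite index subgroup and `b 0, …, b (N-1)` a right transversal for `H`
in `G` (every `g ∈ G` lies in exactly one coset `H * b i`).  Then, both for `• = ∀`
and `• = ∃`, the `C^•`-subsets of `G` are exactly the sets `⋃ i, (L i) * b i` with
each `L i` a `C^•`-subset of `H`. -/
theorem stmt8 (C : LangClass) (hC : IsFullSemiAFL C)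
    {G : Type} [Group G] (H : Subgroup G)
    {N : ℕ} (b : Fin N → G)
    (htrans : ∀ g : G, ∃! i : Fin N, g * (b i)⁻¹ ∈ H)
    {n k : ℕ} (π : List (Fin n) → G) (hπ : FreeHomOnto G π)
    (ρ : List (Fin k) → ↥H) (hρ : FreeHomOnto (↥H) ρ) :
    (∀ X : Set G,
      CForall C π X ↔ ∃ L : Fin N → Set ↥H, (∀ i, CForall C ρ (L i)) ∧
        X = ⋃ i, (fun y : ↥H => (y : G) * b i) '' L i) ∧
    (∀ X : Set G,
      CExists C π X ↔ ∃ L : Fin N → Set ↥H, (∀ i, CExists C ρ (L i)) ∧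
        X = ⋃ i, (fun y : ↥H => (y : G) * b i) '' L i) := by
    classical
  obtain ⟨⟨hHom, hInv, hReg⟩, hUnion⟩ := hC
  obtain ⟨N', rfl⟩ : ∃ N', N = N' + 1 := by
    cases N with
    | zero => obtain ⟨i, -⟩ := (htrans 1).exists; exact i.elim0
    | succ N' => exact ⟨N', rfl⟩
  -- the coset-index function and the coset automaton
  set idx : G → Fin (N'+1) := fun g => (htrans g).choose with hidxdef
  have hidx : ∀ g, g * (b (idx g))⁻¹ ∈ H := fun g => (htrans g).choose_spec.1
  have huniq : ∀ g i, g * (b i)⁻¹ ∈ H → idx g = i :=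
    fun g i h => ((htrans g).choose_spec.2 i h).symm
  have hidx_mul : ∀ h ∈ H, ∀ g : G, idx (h * g) = idx g := by
    intro h hh g
    refine huniq _ _ ?_
    have e1 : h * g * (b (idx g))⁻¹ = h * (g * (b (idx g))⁻¹) := by group
    rw [e1]
    exact H.mul_mem hh (hidx g)
  set δ : Fin (N'+1) → Fin n → Fin (N'+1) := fun j a => idx (b j * π [a]) with hδdef
  set i₀ : Fin (N'+1) := idx 1 with hi₀def
  have hfold : ∀ w : List (Fin n), idx (π w) = w.foldl δ i₀ := by
    intro w
    induction w using List.reverseRecOn with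
    | nil => rw [hπ.map_nil]; simp [hi₀def]
    | append_singleton w a ih =>
      rw [hπ.map_append, List.foldl_append, List.foldl_cons, List.foldl_nil, ← ih]
      have h1 : π w * π [a] = (π w * (b (idx (π w)))⁻¹) * (b (idx (π w)) * π [a]) := by group
      rw [h1, hidx_mul _ (hidx (π w)) _]
  have hb0 : b i₀ ∈ H := by
    have h2 := hidx 1
    rw [one_mul] at h2
    exact H.inv_mem_iff.mp h2
  -- chosen words over the generators of H
  choose u hu using fun (j : Fin (N'+1)) (a : Fin n) =>
    hρ.surjective ⟨b j * π [a] * (b (δ j a))⁻¹, hidx (b j * π [a])⟩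
  obtain ⟨u₀, hu₀⟩ := hρ.surjective ⟨(b i₀)⁻¹, H.inv_mem hb0⟩
  -- the big alphabet: (state, letter) pairs plus a marker
  set enc : Fin (N'+1) → Fin n → Fin ((N'+1)*n + 1) :=
    fun j a => (finProdFinEquiv (j, a)).castSucc with hencdef
  set mk : Fin ((N'+1)*n + 1) := Fin.last _ with hmkdef
  set e : Fin ((N'+1)*n + 1) → List (Fin n) :=
    fun x => Fin.lastCases [] (fun y => [(finProdFinEquiv.symm y).2]) x with hedef
  set ψ : Fin ((N'+1)*n + 1) → List (Fin k) :=
    fun x => Fin.lastCases u₀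
      (fun y => u (finProdFinEquiv.symm y).1 (finProdFinEquiv.symm y).2) x with hψdef
  have he_enc : ∀ j a, e (enc j a) = [a] := by
    intro j a
    simp only [hedef, hencdef, Fin.lastCases_castSucc, Equiv.symm_apply_apply]
  have he_mk : e mk = [] := by
    simp only [hedef, hmkdef, Fin.lastCases_last]
  have hψ_enc : ∀ j a, ψ (enc j a) = u j a := by
    intro j a
    simp only [hψdef, hencdef, Fin.lastCases_castSucc, Equiv.symm_apply_apply]
  have hψ_mk : ψ mk = u₀ := by
    simp only [hψdef, hmkdef, Fin.lastCases_last]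
  have hρψ : ∀ (j : Fin (N'+1)) (w : List (Fin n)),
      ((ρ ((annotate δ enc j w).flatMap ψ) : ↥H) : G) = b j * π w * (b (w.foldl δ j))⁻¹ := by
    intro j w
    induction w generalizing j with
    | nil =>
      show ((ρ (List.flatMap ψ []) : ↥H) : G) = _
      rw [List.flatMap_nil, hρ.map_nil, hπ.map_nil]
      group
      simp
    | cons a w ih =>
      show ((ρ ((enc j a :: annotate δ enc (δ j a) w).flatMap ψ) : ↥H) : G) = _
      rw [List.flatMap_cons, hψ_enc, hρ.map_append, Subgroup.coe_mul, hu, ih,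
        show (a :: w) = [a] ++ w from rfl, hπ.map_append, List.foldl_append]
      simp only [List.foldl_cons, List.foldl_nil]
      group
  have hτ : ∀ w : List (Fin n),
      ((ρ ((mk :: annotate δ enc i₀ w).flatMap ψ) : ↥H) : G) = π w * (b (idx (π w)))⁻¹ := by
    intro w
    rw [List.flatMap_cons, hψ_mk, hρ.map_append, Subgroup.coe_mul, hu₀, hρψ, ← hfold]
    group
  have hfe : ∀ w : List (Fin n), ((mk :: annotate δ enc i₀ w).flatMap e) = w := by
    intro w
    rw [List.flatMap_cons, he_mk, List.nil_append, flatMap_annotate δ enc e he_enc]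
  -- the coset automaton on the big alphabet
  have henc_inj : ∀ j a j' a', enc j a = enc j' a' → j = j' ∧ a = a' := by
    intro j a j' a' h
    simp only [hencdef] at h
    have h2 := finProdFinEquiv.injective (Fin.castSucc_injective _ h)
    exact ⟨congrArg Prod.fst h2, congrArg Prod.snd h2⟩
  have henc_ne_mk : ∀ j a, enc j a ≠ mk := by
    intro j a
    simp only [hencdef, hmkdef]
    exact (Fin.castSucc_lt_last _).ne
  set stp : Option (Option (Fin (N'+1))) → Fin ((N'+1)*n + 1) → Option (Option (Fin (N'+1))) :=
    fun s x =>
      match s with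
      | none => none
      | some none => Fin.lastCases (some (some i₀)) (fun _ => none) x
      | some (some j) =>
        Fin.lastCases none
          (fun y => if (finProdFinEquiv.symm y).1 = j
              then some (some (δ j (finProdFinEquiv.symm y).2)) else none) x
    with hstpdef
  have hstp_mk : ∀ j, stp (some (some j)) mk = none := by
    intro j; simp only [hstpdef, hmkdef]; exact Fin.lastCases_last
  have hstp_enc : ∀ j j' a, stp (some (some j)) (enc j' a)
      = if j' = j then some (some (δ j a)) else none := by
    intro j j' a
    simp only [hstpdef, hencdef]
    rw [Fin.lastCases_castSucc]
    simp [Equiv.symm_apply_apply]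
  have hdead : ∀ v : List (Fin ((N'+1)*n + 1)), v.foldl stp none = none := by
    intro v; induction v with
    | nil => rfl
    | cons x v ih => rw [List.foldl_cons]; exact ih
  have hrun : ∀ (v : List (Fin ((N'+1)*n+1))) (j i : Fin (N'+1)),
      v.foldl stp (some (some j)) = some (some i) ↔
        ∃ w : List (Fin n), v = annotate δ enc j w ∧ w.foldl δ j = i := by
    intro v
    induction v with
    | nil =>
      intro j i
      constructor
      · intro h
        exact ⟨[], rfl, by simpa using h⟩
      · rintro ⟨w, hw, hf⟩
        cases w with
        | nil => simpa using congrArg (fun z => some (some z)) hf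
        | cons a w => exact absurd hw (by simp [annotate])
    | cons x v ih =>
      intro j i
      rw [List.foldl_cons]
      rcases Fin.eq_castSucc_or_eq_last x with ⟨y, rfl⟩ | rfl
      · obtain ⟨⟨j', a⟩, rfl⟩ := finProdFinEquiv.surjective y
        have hxe : (finProdFinEquiv (j', a) : Fin ((N'+1)*n)).castSucc = enc j' a := rfl
        rw [hxe, hstp_enc]
        by_cases hj : j' = j
        · subst hj
          rw [if_pos rfl, ih]
          constructor
          · rintro ⟨w, rfl, hf⟩
            exact ⟨a :: w, by simp [annotate], by simpa using hf⟩
          · rintro ⟨w, hw, hf⟩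
            cases w with
            | nil => exact absurd hw (by simp [annotate])
            | cons a' w =>
              simp only [annotate, List.cons.injEq] at hw
              obtain ⟨h1, h2⟩ := henc_inj _ _ _ _ hw.1.symm
              subst h2
              exact ⟨w, hw.2, by simpa using hf⟩
        · rw [if_neg hj]
          rw [hdead]
          constructor
          · intro h; exact absurd h (by simp)
          · rintro ⟨w, hw, hf⟩
            cases w with
            | nil => exact absurd hw (by simp [annotate])
            | cons a' w =>
              simp only [annotate, List.cons.injEq] at hw
              exact absurd (henc_inj _ _ _ _ hw.1.symm).1.symm hj
      · rw [show Fin.last ((N'+1)*n) = mk from rfl, hstp_mk, hdead]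
        constructor
        · intro h; exact absurd h (by simp)
        · rintro ⟨w, hw, hf⟩
          cases w with
          | nil => exact absurd hw (by simp [annotate])
          | cons a' w =>
            simp only [annotate, List.cons.injEq] at hw
            exact absurd hw.1.symm (henc_ne_mk _ _)
  have haccept : ∀ (v : List (Fin ((N'+1)*n+1))) (i : Fin (N'+1)),
      v.foldl stp (some none) = some (some i) ↔
        ∃ w : List (Fin n), v = mk :: annotate δ enc i₀ w ∧ w.foldl δ i₀ = i := by
    intro v i
    cases v with
    | nil =>
      constructor
      · intro h; exact absurd h (by simp)
      · rintro ⟨w, hw, -⟩; exact absurd hw (by simp)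
    | cons x v =>
      rw [List.foldl_cons]
      rcases Fin.eq_castSucc_or_eq_last x with ⟨y, rfl⟩ | rfl
      · have h1 : stp (some none) y.castSucc = none := by
          simp only [hstpdef]; exact Fin.lastCases_castSucc y
        rw [h1, hdead]
        constructor
        · intro h; exact absurd h (by simp)
        · rintro ⟨w, hw, -⟩
          simp only [List.cons.injEq] at hw
          exact absurd hw.1 (by rw [hmkdef]; exact (Fin.castSucc_lt_last _).ne)
      · have h1 : stp (some none) (Fin.last _) = some (some i₀) := by
          simp only [hstpdef]; exact Fin.lastCases_last
        rw [h1, hrun]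
        constructor
        · rintro ⟨w, rfl, hf⟩; exact ⟨w, rfl, hf⟩
        · rintro ⟨w, hw, hf⟩
          simp only [show mk = Fin.last ((N'+1)*n) from rfl, List.cons.injEq] at hw
          exact ⟨w, hw.2, hf⟩
  -- the small alphabet: generators of H plus a marker
  choose wl hwl using fun c : Fin k => hπ.surjective ((ρ [c] : ↥H) : G)
  choose wb hwb using fun i : Fin (N'+1) => hπ.surjective (b i)
  set φ : Fin (N'+1) → Fin (k+1) → List (Fin n) :=
    fun i x => Fin.lastCases (wb i) (fun c => wl c) x with hφdef
  set d : Fin (k+1) → List (Fin k) := fun x => Fin.lastCases [] (fun c => [c]) x with hddef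
  have hd_cast : ∀ c : Fin k, d c.castSucc = [c] := by
    intro c; simp only [hddef]; exact Fin.lastCases_castSucc c
  have hd_mk : d (Fin.last k) = [] := by simp only [hddef]; exact Fin.lastCases_last
  have hφ_cast : ∀ i (c : Fin k), φ i c.castSucc = wl c := by
    intro i c; simp only [hφdef]; exact Fin.lastCases_castSucc c
  have hφ_mk : ∀ i, φ i (Fin.last k) = wb i := by
    intro i; simp only [hφdef]; exact Fin.lastCases_last
  set stp2 : Option Bool → Fin (k+1) → Option Bool := fun s x =>
    match s with
    | none => none
    | some true => none
    | some false => Fin.lastCases (some true) (fun _ => some false) x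
    with hstp2def
  have hdead2 : ∀ v : List (Fin (k+1)), v.foldl stp2 none = none := by
    intro v; induction v with
    | nil => rfl
    | cons x v ih => rw [List.foldl_cons]; exact ih
  have htrue : ∀ v : List (Fin (k+1)), v.foldl stp2 (some true) = some true ↔ v = [] := by
    intro v
    cases v with
    | nil => simp
    | cons x v =>
      rw [List.foldl_cons, show stp2 (some true) x = none from rfl, hdead2]
      simp
  have hmark : ∀ v : List (Fin (k+1)), v.foldl stp2 (some false) = some true ↔
      ∃ uu : List (Fin k), v = uu.map Fin.castSucc ++ [Fin.last k] := by
    intro v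
    induction v with
    | nil =>
      constructor
      · intro h; exact absurd h (by simp)
      · rintro ⟨uu, huu⟩; exact absurd huu (by simp)
    | cons x v ih =>
      rw [List.foldl_cons]
      rcases Fin.eq_castSucc_or_eq_last x with ⟨y, rfl⟩ | rfl
      · have h1 : stp2 (some false) y.castSucc = some false := by
          simp only [hstp2def]; exact Fin.lastCases_castSucc y
        rw [h1, ih]
        constructor
        · rintro ⟨uu, rfl⟩; exact ⟨y :: uu, by simp⟩
        · rintro ⟨uu, huu⟩
          cases uu with
          | nil =>
            simp only [List.map_nil, List.nil_append, List.cons.injEq] at huu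
            exact absurd huu.1 (Fin.castSucc_lt_last _).ne
          | cons c uu =>
            simp only [List.map_cons, List.cons_append, List.cons.injEq] at huu
            exact ⟨uu, huu.2⟩
      · have h1 : stp2 (some false) (Fin.last k) = some true := by
          simp only [hstp2def]; exact Fin.lastCases_last
        rw [h1, htrue]
        constructor
        · rintro rfl; exact ⟨[], by simp⟩
        · rintro ⟨uu, huu⟩
          cases uu with
          | nil => simpa using huu
          | cons c uu =>
            simp only [List.map_cons, List.cons_append, List.cons.injEq] at huu
            exact absurd huu.1.symm (Fin.castSucc_lt_last _).ne
  have hfd : ∀ uu : List (Fin k), (uu.map Fin.castSucc ++ [Fin.last k]).flatMap d = uu := by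
    intro uu
    induction uu with
    | nil => simp [hd_mk]
    | cons c uu ih =>
      simp only [List.map_cons, List.cons_append, List.flatMap_cons, hd_cast] at *
      simp [ih]
  have hfφ : ∀ i (uu : List (Fin k)),
      (uu.map Fin.castSucc ++ [Fin.last k]).flatMap (φ i) = uu.flatMap wl ++ wb i := by
    intro i uu
    induction uu with
    | nil => simp [hφ_mk]
    | cons c uu ih =>
      simp only [List.map_cons, List.cons_append, List.flatMap_cons, hφ_cast, ih]
      simp
  have hπρflat : ∀ uu : List (Fin k), π (uu.flatMap wl) = ((ρ uu : ↥H) : G) := by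
    intro uu
    induction uu with
    | nil => rw [List.flatMap_nil, hπ.map_nil, hρ.map_nil]; simp
    | cons c uu ih =>
      rw [List.flatMap_cons, hπ.map_append, hwl, ih,
        show (c :: uu) = [c] ++ uu from rfl, hρ.map_append, Subgroup.coe_mul]
  -- the canonical decomposition of a subset of G along the transversal
  have hdecomp : ∀ X : Set G,
      X = ⋃ i, (fun y : ↥H => (y : G) * b i) '' {y : ↥H | (y : G) * b i ∈ X} := by
    intro X
    ext g
    simp only [Set.mem_iUnion, Set.mem_image, Set.mem_setOf_eq]
    constructor
    · intro hg
      refine ⟨idx g, ⟨g * (b (idx g))⁻¹, hidx g⟩, ?_, ?_⟩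
      · show g * (b (idx g))⁻¹ * b (idx g) ∈ X
        rwa [inv_mul_cancel_right]
      · show g * (b (idx g))⁻¹ * b (idx g) = g
        rw [inv_mul_cancel_right]
    · rintro ⟨i, y, hy, rfl⟩
      exact hy
  -- the four image computations
  have himg_e : ∀ (i : Fin (N'+1)) (Y : Set ↥H),
      (fun v : List (Fin ((N'+1)*n+1)) => v.flatMap e) ''
        ({v | ρ (v.flatMap ψ) ∈ Y} ∩ {v | v.foldl stp (some none) = some (some i)})
      = {w : List (Fin n) | π w ∈ (fun y : ↥H => (y : G) * b i) '' Y} := by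
    intro i Y
    ext w
    simp only [Set.mem_image, Set.mem_inter_iff, Set.mem_setOf_eq]
    constructor
    · rintro ⟨v, ⟨hvY, hvR⟩, hvw⟩
      obtain ⟨w', rfl, hfold'⟩ := (haccept v i).mp hvR
      change (mk :: annotate δ enc i₀ w').flatMap e = w at hvw
      rw [hfe w'] at hvw
      subst hvw
      refine ⟨ρ ((mk :: annotate δ enc i₀ w').flatMap ψ), hvY, ?_⟩
      show ((ρ ((mk :: annotate δ enc i₀ w').flatMap ψ) : ↥H) : G) * b i = π w'
      rw [hτ w']
      have hiw : idx (π w') = i := by rw [hfold]; exact hfold'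
      rw [hiw, inv_mul_cancel_right]
    · rintro ⟨y, hy, hyw⟩
      have hiw : idx (π w) = i := by
        apply huniq
        rw [← hyw, mul_inv_cancel_right]
        exact y.2
      refine ⟨mk :: annotate δ enc i₀ w, ⟨?_, ?_⟩, hfe w⟩
      · have h2 : (ρ ((mk :: annotate δ enc i₀ w).flatMap ψ)) = y := by
          apply Subtype.ext
          rw [hτ w, hiw, ← hyw, mul_inv_cancel_right]
        rw [h2]; exact hy
      · exact (haccept _ i).mpr ⟨w, rfl, by rw [← hfold, hiw]⟩
  have himg_ψ : ∀ (i : Fin (N'+1)) (M : Set (List (Fin n))),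
      ρ '' ((fun v : List (Fin ((N'+1)*n+1)) => v.flatMap ψ) ''
        ({v | v.flatMap e ∈ M} ∩ {v | v.foldl stp (some none) = some (some i)}))
      = {y : ↥H | (y : G) * b i ∈ π '' M} := by
    intro i M
    ext y
    simp only [Set.mem_image, Set.mem_inter_iff, Set.mem_setOf_eq]
    constructor
    · rintro ⟨uu, ⟨v, ⟨hvM, hvR⟩, rfl⟩, rfl⟩
      obtain ⟨w, rfl, hfold'⟩ := (haccept v i).mp hvR
      have hiw : idx (π w) = i := by rw [hfold]; exact hfold'
      rw [hfe w] at hvM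
      have h2 : ((ρ ((mk :: annotate δ enc i₀ w).flatMap ψ) : ↥H) : G) * b i = π w := by
        rw [hτ, hiw, inv_mul_cancel_right]
      rw [h2]
      exact ⟨w, hvM, rfl⟩
    · intro hy
      obtain ⟨w, hwM, hw⟩ := hy
      have hiw : idx (π w) = i := by
        apply huniq
        rw [hw, mul_inv_cancel_right]
        exact y.2
      refine ⟨(mk :: annotate δ enc i₀ w).flatMap ψ,
        ⟨mk :: annotate δ enc i₀ w, ⟨?_, ?_⟩, rfl⟩, ?_⟩
      · rw [hfe w]; exact hwM
      · exact (haccept _ i).mpr ⟨w, rfl, by rw [← hfold, hiw]⟩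
      · apply Subtype.ext
        rw [hτ w, hiw, hw, mul_inv_cancel_right]
  have himg_d : ∀ (i : Fin (N'+1)) (X : Set G),
      (fun v : List (Fin (k+1)) => v.flatMap d) ''
        ({v | π (v.flatMap (φ i)) ∈ X} ∩ {v | v.foldl stp2 (some false) = some true})
      = {uu : List (Fin k) | ((ρ uu : ↥H) : G) * b i ∈ X} := by
    intro i X
    ext uu
    simp only [Set.mem_image, Set.mem_inter_iff, Set.mem_setOf_eq]
    constructor
    · rintro ⟨v, ⟨hvX, hvR⟩, hvu⟩
      obtain ⟨uu', rfl⟩ := (hmark v).mp hvR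
      change (uu'.map Fin.castSucc ++ [Fin.last k]).flatMap d = uu at hvu
      rw [hfd] at hvu
      subst hvu
      rwa [hfφ i, hπ.map_append, hπρflat, hwb] at hvX
    · intro huu
      refine ⟨uu.map Fin.castSucc ++ [Fin.last k], ⟨?_, (hmark _).mpr ⟨uu, rfl⟩⟩, hfd uu⟩
      show π ((uu.map Fin.castSucc ++ [Fin.last k]).flatMap (φ i)) ∈ X
      rw [hfφ i, hπ.map_append, hπρflat, hwb]
      exact huu
  have himg_φ : ∀ (i : Fin (N'+1)) (K : Set (List (Fin k))),
      π '' ((fun v : List (Fin (k+1)) => v.flatMap (φ i)) ''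
        ({v | v.flatMap d ∈ K} ∩ {v | v.foldl stp2 (some false) = some true}))
      = (fun y : ↥H => (y : G) * b i) '' (ρ '' K) := by
    intro i K
    ext g
    simp only [Set.mem_image, Set.mem_inter_iff, Set.mem_setOf_eq]
    constructor
    · rintro ⟨w0, ⟨v, ⟨hvK, hvR⟩, rfl⟩, rfl⟩
      obtain ⟨uu, rfl⟩ := (hmark v).mp hvR
      rw [hfd] at hvK
      refine ⟨ρ uu, ⟨uu, hvK, rfl⟩, ?_⟩
      show ((ρ uu : ↥H) : G) * b i = π ((uu.map Fin.castSucc ++ [Fin.last k]).flatMap (φ i))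
      rw [hfφ i, hπ.map_append, hπρflat, hwb]
    · rintro ⟨y, ⟨uu, huuK, rfl⟩, rfl⟩
      refine ⟨(uu.map Fin.castSucc ++ [Fin.last k]).flatMap (φ i),
        ⟨uu.map Fin.castSucc ++ [Fin.last k], ⟨?_, (hmark _).mpr ⟨uu, rfl⟩⟩, rfl⟩, ?_⟩
      · rw [hfd]; exact huuK
      · rw [hfφ i, hπ.map_append, hπρflat, hwb]
  -- assembling the four directions
  constructor
  · -- the `∀` statement
    intro X
    constructor
    · -- C^∀(G) ⟶ decomposition
      intro hX
      refine ⟨fun i => {y : ↥H | (y : G) * b i ∈ X}, fun i => ?_, hdecomp X⟩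
      show {uu : List (Fin k) | ρ uu ∈ {y : ↥H | (y : G) * b i ∈ X}} ∈ C k
      have h2 : {uu : List (Fin k) | ρ uu ∈ {y : ↥H | (y : G) * b i ∈ X}}
          = (fun v : List (Fin (k+1)) => v.flatMap d) ''
            ({v | π (v.flatMap (φ i)) ∈ X} ∩ {v | v.foldl stp2 (some false) = some true}) :=
        (himg_d i X).symm
      rw [h2]
      exact hHom _ _ d _ (hReg _ _ (hInv _ _ (φ i) _ hX) _
        (isRegular_foldl stp2 (some false) {s | s = some true}))
    · -- decomposition ⟶ C^∀(G)
      rintro ⟨L, hL, rfl⟩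
      show {w : List (Fin n) | π w ∈ ⋃ i, (fun y : ↥H => (y : G) * b i) '' L i} ∈ C n
      have hset : {w : List (Fin n) | π w ∈ ⋃ i, (fun y : ↥H => (y : G) * b i) '' L i}
          = ⋃ i, (fun v : List (Fin ((N'+1)*n+1)) => v.flatMap e) ''
              ({v | ρ (v.flatMap ψ) ∈ L i} ∩ {v | v.foldl stp (some none) = some (some i)}) := by
        ext w
        simp only [Set.mem_setOf_eq, Set.mem_iUnion]
        constructor
        · rintro ⟨i, hi⟩
          refine ⟨i, ?_⟩
          rw [himg_e i (L i)]
          exact hi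
        · rintro ⟨i, hi⟩
          refine ⟨i, ?_⟩
          rw [himg_e i (L i)] at hi
          exact hi
      rw [hset]
      refine iUnion_mem_C C hUnion n _ (fun i => ?_)
      exact hHom _ _ e _ (hReg _ _ (hInv _ _ ψ _ (hL i)) _
        (isRegular_foldl stp (some none) {s | s = some (some i)}))
  · -- the `∃` statement
    intro X
    constructor
    · -- C^∃(G) ⟶ decomposition
      rintro ⟨M, hM, hMX⟩
      refine ⟨fun i => {y : ↥H | (y : G) * b i ∈ X}, fun i => ?_, hdecomp X⟩
      refine ⟨(fun v : List (Fin ((N'+1)*n+1)) => v.flatMap ψ) ''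
        ({v | v.flatMap e ∈ M} ∩ {v | v.foldl stp (some none) = some (some i)}), ?_, ?_⟩
      · exact hHom _ _ ψ _ (hReg _ _ (hInv _ _ e _ hM) _
          (isRegular_foldl stp (some none) {s | s = some (some i)}))
      · rw [himg_ψ i M, hMX]
    · -- decomposition ⟶ C^∃(G)
      rintro ⟨L, hL, rfl⟩
      choose K hK hρK using hL
      refine ⟨⋃ i, (fun v : List (Fin (k+1)) => v.flatMap (φ i)) ''
        ({v | v.flatMap d ∈ K i} ∩ {v | v.foldl stp2 (some false) = some true}), ?_, ?_⟩
      · refine iUnion_mem_C C hUnion n _ (fun i => ?_)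
        exact hHom _ _ (φ i) _ (hReg _ _ (hInv _ _ d _ (hK i)) _
          (isRegular_foldl stp2 (some false) {s | s = some true}))
      · rw [Set.image_iUnion]
        refine Set.iUnion_congr fun i => ?_
        rw [himg_φ i (K i), hρK i]
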